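/- For every n ≥ 1, the von Neumann entropy of the decoherence matrix restricted to A_P^{(n)} satisfies S_{A_P^{(n)}} = −Σ_{j} ( p_L^{(n)}(j) log₂ p_L^{(n)}(j) + p_R^{(n)}(j) log₂ p_R^{(n)}(j) ), where the sum runs over j ∈ {−n, −n+2, …, n−2, n} and 0·log₂ 0 = 0. -/

import Mathlib

open Matrix Filter
open scoped BigOperators Classical

noncomputable section

/-- Index in `Fin 2` of a direction: `false` ↔ `-1` (index `0`), `true` ↔ `1` (index `1`). -/
def bidx (b : Bool) : Fin 2 := if b then 1 else 0

/-- The standard basis vector `e_j`, `j ∈ {-1,1}`, of `ℂ²`. -/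
def eVec (b : Bool) : Fin 2 → ℂ := fun i => if i = bidx b then 1 else 0

/-- The projection `e_j e_j†`. -/
def projC (b : Bool) : Matrix (Fin 2) (Fin 2) ℂ :=
  Matrix.single (bidx b) (bidx b) 1

/-- `P_j = e_j e_j† U`. -/
def pMat (U : Matrix (Fin 2) (Fin 2) ℂ) (b : Bool) : Matrix (Fin 2) (Fin 2) ℂ :=
  projC b * U

/-- The weight of a path `ξ = (ξ_n, …, ξ_1)` (here `ξ i` is step `i+1`):
`w(ξ) = P_{ξ_n} ⋯ P_{ξ_1} φ₀`. -/
def weight (U : Matrix (Fin 2) (Fin 2) ℂ) (φ₀ : Fin 2 → ℂ) {n : ℕ} (ξ : Fin n → Bool) :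
    Fin 2 → ℂ :=
  ((List.ofFn fun i => pMat U (ξ i)).reverse.prod).mulVec φ₀

/-- The complex inner product `⟨v, w⟩`, conjugate-linear in the first slot. -/
def cdot (v w : Fin 2 → ℂ) : ℂ := ∑ i, (starRingEnd ℂ) (v i) * w i

/-- The decoherence matrix restricted to a set `A` of pairs of paths. -/
def decMat (U : Matrix (Fin 2) (Fin 2) ℂ) (φ₀ : Fin 2 → ℂ) {n : ℕ}
    (A : Set ((Fin n → Bool) × (Fin n → Bool))) :
    Matrix (Fin n → Bool) (Fin n → Bool) ℂ :=
  Matrix.of fun ξ η =>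
    if (ξ, η) ∈ A then cdot (weight U φ₀ ξ) (weight U φ₀ η) else 0

/-- `ξ_1 + ⋯ + ξ_n ∈ ℤ`, each step being `±1`. -/
def pathSum {n : ℕ} (ξ : Fin n → Bool) : ℤ := ∑ i, (if ξ i then 1 else -1)

/-- `A₀^{(n)}`: pairs of paths with the same final direction (paths have length `n+1`). -/
def A0 (n : ℕ) : Set ((Fin (n+1) → Bool) × (Fin (n+1) → Bool)) :=
  {x | x.1 (Fin.last n) = x.2 (Fin.last n)}

/-- `A_P^{(n)}`: pairs of paths with the same final direction and the same endpoint. -/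
def AP (n : ℕ) : Set ((Fin (n+1) → Bool) × (Fin (n+1) → Bool)) :=
  {x | x.1 (Fin.last n) = x.2 (Fin.last n) ∧ pathSum x.1 = pathSum x.2}

/-- `A₁^{(n)}`: the diagonal pairs. -/
def A1 (n : ℕ) : Set ((Fin (n+1) → Bool) × (Fin (n+1) → Bool)) :=
  {x | x.1 = x.2}

/-- The von Neumann entropy `S(D) = −Σᵢ λᵢ log₂ λᵢ`, summing over the eigenvalues with
multiplicity (the roots of the characteristic polynomial; they are real for a PSD Hermitian
matrix), with the convention `0 · log₂ 0 = 0`. -/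
def vnEntropy {I : Type*} [Fintype I] [DecidableEq I] (D : Matrix I I ℂ) : ℝ :=
  -((D.charpoly.roots).map fun lam => lam.re * Real.logb 2 lam.re).sum

/-- The real projection `e_j e_j†`. -/
def projR (b : Bool) : Matrix (Fin 2) (Fin 2) ℝ :=
  Matrix.single (bidx b) (bidx b) 1

/-- The stochastic matrix `M = [[p, q], [q, p]]` of the correlated random walk, `q = 1 − p`. -/
def rwM (p : ℝ) : Matrix (Fin 2) (Fin 2) ℝ := !![p, 1-p; 1-p, p]

/-- The initial vector `φ = (q₀, p₀)ᵀ` of the correlated random walk, `q₀ = 1 − p₀`. -/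
def rwφ (p₀ : ℝ) : Fin 2 → ℝ := ![1 - p₀, p₀]

/-- `P̃_{ξ_n} ⋯ P̃_{ξ_2} φ_{ξ_1}`, where `P̃_j = e_j e_j† M` and `φ_j = e_j e_j† φ`. -/
def rwVec (p p₀ : ℝ) : {n : ℕ} → (Fin n → Bool) → (Fin 2 → ℝ)
  | 0, _ => rwφ p₀
  | n + 1, ξ =>
      ((List.ofFn fun i : Fin n => projR (ξ i.succ) * rwM p).reverse.prod).mulVec
        ((projR (ξ 0)).mulVec (rwφ p₀))

/-- `p_L^{(n)}(j)`: the probability that the `(p₀,p)`-correlated random walk is at `j`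
at time `n`, having arrived from the left. -/
def pL (p p₀ : ℝ) (n : ℕ) (j : ℤ) : ℝ :=
  ∑ ξ ∈ Finset.univ.filter (fun ξ : Fin n → Bool => pathSum ξ = j), rwVec p p₀ ξ 0

/-- `p_R^{(n)}(j)`: the probability that the `(p₀,p)`-correlated random walk is at `j`
at time `n`, having arrived from the right. -/
def pR (p p₀ : ℝ) (n : ℕ) (j : ℤ) : ℝ :=
  ∑ ξ ∈ Finset.univ.filter (fun ξ : Fin n → Bool => pathSum ξ = j), rwVec p p₀ ξ 1


-- ===== Auxiliary lemmas =====

open Polynomial in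
lemma eval_charpoly' {m : Type*} [Fintype m] [DecidableEq m] (M : Matrix m m ℂ) (x : ℂ) :
    (M.charpoly).eval x = (x • (1 : Matrix m m ℂ) - M).det := by
  rw [Matrix.charpoly, ← Polynomial.coe_evalRingHom, RingHom.map_det]
  congr 1
  ext i j
  simp [Matrix.charmatrix_apply, Matrix.diagonal_apply, Matrix.one_apply, RingHom.mapMatrix_apply,
    apply_ite (Polynomial.eval x)]

open Polynomial in
lemma charpoly_mul_comm' {m k : Type*} [Fintype m] [Fintype k] [DecidableEq m] [DecidableEq k]
    (A : Matrix m k ℂ) (B : Matrix k m ℂ) :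
    X ^ (Fintype.card k) * (A * B).charpoly = X ^ (Fintype.card m) * (B * A).charpoly := by
  apply Polynomial.eq_of_infinite_eval_eq
  apply Set.Infinite.mono (s := {x : ℂ | x ≠ 0})
  · intro x hx
    have hx : x ≠ 0 := hx
    simp only [Set.mem_setOf_eq, eval_mul, eval_pow, eval_X, eval_charpoly']
    have h1 : x • (1 : Matrix m m ℂ) - A * B = x • ((1 : Matrix m m ℂ) + (-(x⁻¹) • A) * B) := by
      rw [Matrix.smul_mul, smul_add, smul_smul, mul_neg, mul_inv_cancel₀ hx, neg_one_smul,
        ← sub_eq_add_neg]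
    have h2 : x • (1 : Matrix k k ℂ) - B * A = x • ((1 : Matrix k k ℂ) + B * (-(x⁻¹) • A)) := by
      rw [Matrix.mul_smul, smul_add, smul_smul, mul_neg, mul_inv_cancel₀ hx, neg_one_smul,
        ← sub_eq_add_neg]
    rw [h1, h2, Matrix.det_smul, Matrix.det_smul, Matrix.det_one_add_mul_comm]
    ring
  · have : {x : ℂ | x ≠ 0} = {(0:ℂ)}ᶜ := rfl
    rw [this]
    exact Set.Finite.infinite_compl (Set.finite_singleton 0)

open Polynomial in
lemma charpoly_diagonal' {J : Type*} [Fintype J] [DecidableEq J] (g : J → ℂ) :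
    (Matrix.diagonal g).charpoly = ∏ B : J, (X - C (g B)) := by
  rw [Matrix.charpoly]
  have : (Matrix.diagonal g).charmatrix = Matrix.diagonal (fun B => (X : ℂ[X]) - C (g B)) := by
    ext i j
    by_cases h : i = j
    · subst h; simp [Matrix.charmatrix_apply_eq]
    · simp [Matrix.charmatrix_apply_ne _ _ _ h, Matrix.diagonal_apply_ne _ h,
        Matrix.diagonal_apply_ne g h]
  rw [this, Matrix.det_diagonal]

open Polynomial in
lemma sum_roots_gram {I J : Type*} [Fintype I] [Fintype J] [DecidableEq I] [DecidableEq J]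
    (T : Matrix J I ℂ) (g : J → ℂ)
    (hD : T * Tᴴ = Matrix.diagonal g)
    (F : ℂ → ℝ) (hF0 : F 0 = 0) :
    (((Tᴴ * T).charpoly.roots).map F).sum = ∑ B : J, F (g B) := by
  have hc := _root_.charpoly_mul_comm' Tᴴ T
  rw [hD, charpoly_diagonal'] at hc
  have hprod : (∏ B : J, (X - C (g B))) = ((Finset.univ.val.map g).map fun a => X - C a).prod := by
    rw [Multiset.map_map]; rfl
  have hroots := congrArg Polynomial.roots hc
  rw [Polynomial.roots_mul (mul_ne_zero (pow_ne_zero _ Polynomial.X_ne_zero)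
        (Matrix.charpoly_monic _).ne_zero),
      Polynomial.roots_mul (mul_ne_zero (pow_ne_zero _ Polynomial.X_ne_zero)
        (by rw [hprod]
            exact (Polynomial.monic_multiset_prod_of_monic _ _
              (fun a _ => Polynomial.monic_X_sub_C a)).ne_zero)),
      hprod, Polynomial.roots_multiset_prod_X_sub_C, Polynomial.roots_pow, Polynomial.roots_pow,
      Polynomial.roots_X] at hroots
  have := congrArg (fun s : Multiset ℂ => ((s.map F)).sum) hroots
  simp only [Multiset.map_add, Multiset.sum_add, Multiset.nsmul_singleton,
    Multiset.map_replicate, Multiset.sum_replicate, hF0, smul_zero, zero_add] at this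
  rw [this, Multiset.map_map]
  rfl

lemma projC_mul_mulVec (b : Bool) (X : Matrix (Fin 2) (Fin 2) ℂ) (v : Fin 2 → ℂ) (i : Fin 2) :
    ((projC b * X).mulVec v) i = if i = bidx b then ∑ j, X (bidx b) j * v j else 0 := by
  rw [← Matrix.mulVec_mulVec]
  simp only [Matrix.mulVec, dotProduct, projC, Matrix.single, Matrix.of_apply]
  by_cases h : i = bidx b
  · subst h
    rw [if_pos rfl, Finset.sum_eq_single (bidx b)]
    · simp [Matrix.mulVec, dotProduct, Fin.sum_univ_two]
    · intro l _ hl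
      simp [Ne.symm hl]
    · simp
  · rw [if_neg h]
    apply Finset.sum_eq_zero
    intro j _
    simp [Ne.symm h]

lemma projR_mul_mulVec (b : Bool) (X : Matrix (Fin 2) (Fin 2) ℝ) (v : Fin 2 → ℝ) (i : Fin 2) :
    ((projR b * X).mulVec v) i = if i = bidx b then ∑ j, X (bidx b) j * v j else 0 := by
  rw [← Matrix.mulVec_mulVec]
  simp only [Matrix.mulVec, dotProduct, projR, Matrix.single, Matrix.of_apply]
  by_cases h : i = bidx b
  · subst h
    rw [if_pos rfl, Finset.sum_eq_single (bidx b)]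
    · simp [Matrix.mulVec, dotProduct, Fin.sum_univ_two]
    · intro l _ hl
      simp [Ne.symm hl]
    · simp
  · rw [if_neg h]
    apply Finset.sum_eq_zero
    intro j _
    simp [Ne.symm h]

lemma projR_mulVec (b : Bool) (v : Fin 2 → ℝ) (i : Fin 2) :
    ((projR b).mulVec v) i = if i = bidx b then v (bidx b) else 0 := by
  have := projR_mul_mulVec b 1 v i
  rw [mul_one] at this
  rw [this]
  by_cases h : i = bidx b
  · subst h
    rw [if_pos rfl, if_pos rfl, Finset.sum_eq_single (bidx b)]
    · simp [Matrix.one_apply]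
    · intro l _ hl
      simp [Matrix.one_apply, Ne.symm hl]
    · simp
  · rw [if_neg h, if_neg h]

lemma weight_succ (U : Matrix (Fin 2) (Fin 2) ℂ) (φ₀ : Fin 2 → ℂ) {n : ℕ}
    (ξ : Fin (n+1) → Bool) :
    weight U φ₀ ξ = (pMat U (ξ (Fin.last n))).mulVec (weight U φ₀ (ξ ∘ Fin.castSucc)) := by
  unfold weight
  rw [List.ofFn_succ', List.concat_eq_append, List.reverse_append, List.reverse_cons,
    List.reverse_nil, List.nil_append, List.singleton_append, List.prod_cons,
    Matrix.mulVec_mulVec]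
  rfl

lemma rwVec_succ (p p₀ : ℝ) {n : ℕ} (ξ : Fin (n+2) → Bool) :
    rwVec p p₀ ξ = (projR (ξ (Fin.last (n+1))) * rwM p).mulVec (rwVec p p₀ (ξ ∘ Fin.castSucc)) := by
  show ((List.ofFn fun i : Fin (n+1) => projR (ξ i.succ) * rwM p).reverse.prod).mulVec
        ((projR (ξ 0)).mulVec (rwφ p₀)) = _
  rw [List.ofFn_succ', List.concat_eq_append, List.reverse_append, List.reverse_cons,
    List.reverse_nil, List.nil_append, List.singleton_append, List.prod_cons,
    Matrix.mulVec_mulVec, Fin.succ_last]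
  show _ = (projR (ξ (Fin.last (n+1))) * rwM p).mulVec
      (((List.ofFn fun i : Fin n => projR ((ξ ∘ Fin.castSucc) i.succ) * rwM p).reverse.prod).mulVec
        ((projR ((ξ ∘ Fin.castSucc) 0)).mulVec (rwφ p₀)))
  rw [Matrix.mulVec_mulVec, Matrix.mulVec_mulVec]
  congr 2

lemma key_lemma (U : Matrix (Fin 2) (Fin 2) ℂ) (φ₀ : Fin 2 → ℂ) (p p₀ : ℝ)
    (hM : ∀ i j : Fin 2, Complex.normSq (U i j) = rwM p i j)
    (hφ0 : ∀ i : Fin 2, Complex.normSq ((U.mulVec φ₀) i) = rwφ p₀ i) :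
    ∀ {n : ℕ} (ξ : Fin (n+1) → Bool),
      (∀ i, i ≠ bidx (ξ (Fin.last n)) → weight U φ₀ ξ i = 0) ∧
      (∀ i, i ≠ bidx (ξ (Fin.last n)) → rwVec p p₀ ξ i = 0) ∧
      Complex.normSq (weight U φ₀ ξ (bidx (ξ (Fin.last n)))) =
        rwVec p p₀ ξ (bidx (ξ (Fin.last n))) := by
  intro n
  induction n with
  | zero =>
    intro ξ
    have hw : weight U φ₀ ξ = (pMat U (ξ 0)).mulVec φ₀ := by
      unfold weight
      simp [List.ofFn_succ]
    have hlast : ξ (Fin.last 0) = ξ 0 := rfl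
    have hr : rwVec p p₀ ξ = (projR (ξ 0)).mulVec (rwφ p₀) := by
      show ((List.ofFn (fun i : Fin 0 => projR (ξ i.succ) * rwM p)).reverse.prod).mulVec _ = _
      simp
    refine ⟨?_, ?_, ?_⟩
    · intro i hi
      rw [hw, hlast] at *
      rw [pMat, projC_mul_mulVec, if_neg hi]
    · intro i hi
      rw [hr, hlast] at *
      rw [projR_mulVec, if_neg hi]
    · rw [hw, hr, hlast, pMat, projC_mul_mulVec, if_pos rfl, projR_mulVec, if_pos rfl]
      rw [← hφ0]
      rfl
  | succ n ih =>
    intro ξ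
    set b := ξ (Fin.last (n+1)) with hb
    set ξ' := ξ ∘ Fin.castSucc with hξ'
    set k := bidx (ξ' (Fin.last n)) with hk
    obtain ⟨hw0, hr0, hns⟩ := ih ξ'
    have hw : weight U φ₀ ξ = (pMat U b).mulVec (weight U φ₀ ξ') := weight_succ U φ₀ ξ
    have hr : rwVec p p₀ ξ = (projR b * rwM p).mulVec (rwVec p p₀ ξ') := rwVec_succ p p₀ ξ
    refine ⟨?_, ?_, ?_⟩
    · intro i hi
      rw [hw, pMat, projC_mul_mulVec, if_neg hi]
    · intro i hi
      rw [hr, projR_mul_mulVec, if_neg hi]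
    · rw [hw, hr, pMat, projC_mul_mulVec, if_pos rfl, projR_mul_mulVec, if_pos rfl]
      rw [Finset.sum_eq_single k, Finset.sum_eq_single k]
      · rw [Complex.normSq_mul, hns, hM]
      · intro j _ hj
        rw [hr0 j hj, mul_zero]
      · simp
      · intro j _ hj
        rw [hw0 j hj, mul_zero]
      · simp

lemma pathSum_mem (n : ℕ) (ξ : Fin (n+1) → Bool) :
    pathSum ξ ∈ (Finset.Icc (-((n : ℤ) + 1)) ((n : ℤ) + 1)).filter
      (fun j => j % 2 = ((n : ℤ) + 1) % 2) := by
  have h1 : pathSum ξ ≤ (n : ℤ) + 1 := by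
    unfold pathSum
    calc ∑ i, (if ξ i then (1:ℤ) else -1) ≤ ∑ _i : Fin (n+1), (1:ℤ) :=
          Finset.sum_le_sum (fun i _ => by split <;> omega)
      _ = (n : ℤ) + 1 := by simp
  have h2 : -((n : ℤ) + 1) ≤ pathSum ξ := by
    unfold pathSum
    calc -((n : ℤ) + 1) = ∑ _i : Fin (n+1), (-1 : ℤ) := by simp
      _ ≤ ∑ i, (if ξ i then (1:ℤ) else -1) :=
          Finset.sum_le_sum (fun i _ => by split <;> omega)
  have h3 : (2 : ℤ) ∣ pathSum ξ + ((n : ℤ) + 1) := by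
    have : pathSum ξ + ((n : ℤ) + 1) = ∑ i : Fin (n+1), ((if ξ i then (1:ℤ) else -1) + 1) := by
      rw [Finset.sum_add_distrib]
      simp [pathSum]
    rw [this]
    exact Finset.dvd_sum (fun i _ => by split <;> omega)
  simp only [Finset.mem_filter, Finset.mem_Icc]
  omega

lemma unitary_normSq (a b c d : ℂ) (hU : !![a, b; c, d] ∈ Matrix.unitaryGroup (Fin 2) ℂ)
    (p : ℝ) (hp : p = ‖a‖ ^ 2) :
    ∀ i j, Complex.normSq (!![a, b; c, d] i j) = rwM p i j := by
  have hr00 : a * (starRingEnd ℂ) a + b * (starRingEnd ℂ) b = 1 := by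
    simpa [Matrix.mul_apply, Fin.sum_univ_two, Matrix.one_apply, Matrix.conjTranspose_apply,
      Matrix.star_apply] using congrFun (congrFun hU.2 0) 0
  have hr11 : c * (starRingEnd ℂ) c + d * (starRingEnd ℂ) d = 1 := by
    simpa [Matrix.mul_apply, Fin.sum_univ_two, Matrix.one_apply, Matrix.conjTranspose_apply,
      Matrix.star_apply] using congrFun (congrFun hU.2 1) 1
  have hc00 : (starRingEnd ℂ) a * a + (starRingEnd ℂ) c * c = 1 := by
    simpa [Matrix.mul_apply, Fin.sum_univ_two, Matrix.one_apply, Matrix.conjTranspose_apply,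
      Matrix.star_apply] using congrFun (congrFun hU.1 0) 0
  have nab : Complex.normSq a + Complex.normSq b = 1 := by
    rw [Complex.mul_conj, Complex.mul_conj] at hr00
    exact_mod_cast hr00
  have ncd : Complex.normSq c + Complex.normSq d = 1 := by
    rw [Complex.mul_conj, Complex.mul_conj] at hr11
    exact_mod_cast hr11
  have nac : Complex.normSq a + Complex.normSq c = 1 := by
    rw [mul_comm _ a, mul_comm _ c, Complex.mul_conj, Complex.mul_conj] at hc00
    exact_mod_cast hc00
  have hpa : Complex.normSq a = p := by rw [hp, Complex.sq_norm]
  intro i j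
  fin_cases i <;> fin_cases j <;> simp [rwM] <;> linarith

lemma unitary_normSq_mulVec (a b c d α β : ℂ)
    (hU : !![a, b; c, d] ∈ Matrix.unitaryGroup (Fin 2) ℂ)
    (hφ : ‖α‖ ^ 2 + ‖β‖ ^ 2 = 1)
    (p₀ : ℝ) (hp₀ : p₀ = ‖c * α + d * β‖ ^ 2) :
    ∀ i, Complex.normSq ((!![a, b; c, d].mulVec ![α, β]) i) = rwφ p₀ i := by
  have hc00 : (starRingEnd ℂ) a * a + (starRingEnd ℂ) c * c = 1 := by
    simpa [Matrix.mul_apply, Fin.sum_univ_two, Matrix.one_apply, Matrix.conjTranspose_apply,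
      Matrix.star_apply] using congrFun (congrFun hU.1 0) 0
  have hc01 : (starRingEnd ℂ) a * b + (starRingEnd ℂ) c * d = 0 := by
    simpa [Matrix.mul_apply, Fin.sum_univ_two, Matrix.one_apply, Matrix.conjTranspose_apply,
      Matrix.star_apply] using congrFun (congrFun hU.1 0) 1
  have hc10 : (starRingEnd ℂ) b * a + (starRingEnd ℂ) d * c = 0 := by
    simpa [Matrix.mul_apply, Fin.sum_univ_two, Matrix.one_apply, Matrix.conjTranspose_apply,
      Matrix.star_apply] using congrFun (congrFun hU.1 1) 0
  have hc11 : (starRingEnd ℂ) b * b + (starRingEnd ℂ) d * d = 1 := by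
    simpa [Matrix.mul_apply, Fin.sum_univ_two, Matrix.one_apply, Matrix.conjTranspose_apply,
      Matrix.star_apply] using congrFun (congrFun hU.1 1) 1
  have hv0 : (!![a, b; c, d].mulVec ![α, β]) 0 = a * α + b * β := by
    simp [Matrix.mulVec, dotProduct, Fin.sum_univ_two]
  have hv1 : (!![a, b; c, d].mulVec ![α, β]) 1 = c * α + d * β := by
    simp [Matrix.mulVec, dotProduct, Fin.sum_univ_two]
  have hconsC : (a * α + b * β) * (starRingEnd ℂ) (a * α + b * β) +
      (c * α + d * β) * (starRingEnd ℂ) (c * α + d * β) =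
      α * (starRingEnd ℂ) α + β * (starRingEnd ℂ) β := by
    simp only [map_add, _root_.map_mul]
    linear_combination (α * (starRingEnd ℂ) α) * hc00 + (β * (starRingEnd ℂ) α) * hc01 +
      (α * (starRingEnd ℂ) β) * hc10 + (β * (starRingEnd ℂ) β) * hc11
  have hcons : Complex.normSq (a * α + b * β) + Complex.normSq (c * α + d * β) = 1 := by
    have h1 : Complex.normSq α + Complex.normSq β = 1 := by
      rw [← Complex.sq_norm, ← Complex.sq_norm]; exact hφ
    rw [Complex.mul_conj, Complex.mul_conj, Complex.mul_conj, Complex.mul_conj] at hconsC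
    have h2 : Complex.normSq (a * α + b * β) + Complex.normSq (c * α + d * β) =
        Complex.normSq α + Complex.normSq β := by exact_mod_cast hconsC
    linarith
  have h1' : Complex.normSq (c * α + d * β) = p₀ := by rw [hp₀, Complex.sq_norm]
  rw [Fin.forall_fin_two]
  constructor
  · rw [hv0]; simp only [rwφ]; simp; linarith
  · rw [hv1]; simp only [rwφ]; simp; linarith


/-- `S_{A_P^{(n)}} = −Σ_j (p_L(j) log₂ p_L(j) + p_R(j) log₂ p_R(j))`, the sum
running over `j ∈ {-(n+1), -(n+1)+2, …, n+1}` (paths of length `n+1`; `0 log₂ 0 = 0`). -/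
theorem vnEntropy_decMat_AP
    (a b c d α β : ℂ)
    (hU : !![a, b; c, d] ∈ Matrix.unitaryGroup (Fin 2) ℂ)
    (habcd : a * b * c * d ≠ 0)
    (hφ : ‖α‖ ^ 2 + ‖β‖ ^ 2 = 1)
    (p q p₀ q₀ : ℝ)
    (hp : p = ‖a‖ ^ 2) (hq : q = 1 - p)
    (hp₀ : p₀ = ‖c * α + d * β‖ ^ 2) (hq₀ : q₀ = 1 - p₀)
    (n : ℕ) :
    vnEntropy (decMat !![a, b; c, d] ![α, β] (AP n)) =
      -(∑ j ∈ (Finset.Icc (-((n : ℤ) + 1)) ((n : ℤ) + 1)).filter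
            (fun j => j % 2 = ((n : ℤ) + 1) % 2),
          (pL p p₀ (n + 1) j * Real.logb 2 (pL p p₀ (n + 1) j) +
           pR p p₀ (n + 1) j * Real.logb 2 (pR p p₀ (n + 1) j))) := by
  have hM := unitary_normSq a b c d hU p hp
  have hφ0 := unitary_normSq_mulVec a b c d α β hU hφ p₀ hp₀
  have key := key_lemma !![a, b; c, d] ![α, β] p p₀ hM hφ0 (n := n)
  set S : Finset ℤ := (Finset.Icc (-((n : ℤ) + 1)) ((n : ℤ) + 1)).filter
      (fun j => j % 2 = ((n : ℤ) + 1) % 2) with hS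
  let Jt := Bool × {j : ℤ // j ∈ S}
  let bl : (Fin (n+1) → Bool) → Jt := fun ξ => (ξ (Fin.last n), ⟨pathSum ξ, pathSum_mem n ξ⟩)
  let cv : (Fin (n+1) → Bool) → ℂ := fun ξ => weight !![a, b; c, d] ![α, β] ξ (bidx (ξ (Fin.last n)))
  let T : Matrix Jt (Fin (n+1) → Bool) ℂ := Matrix.of fun B ξ => if bl ξ = B then cv ξ else 0
  let L : Jt → ℝ := fun B =>
    ∑ ξ ∈ Finset.univ.filter (fun ξ => bl ξ = B), Complex.normSq (cv ξ)
  have hbl_eq : ∀ ξ η : Fin (n+1) → Bool, ((ξ, η) ∈ AP n) ↔ bl ξ = bl η := by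
    intro ξ η
    have hmem : ((ξ, η) ∈ AP n) ↔ (ξ (Fin.last n) = η (Fin.last n) ∧ pathSum ξ = pathSum η) :=
      Iff.rfl
    rw [hmem]
    constructor
    · rintro ⟨h1, h2⟩
      exact Prod.ext_iff.mpr ⟨h1, Subtype.ext h2⟩
    · intro h
      have h' := Prod.ext_iff.mp h
      exact ⟨h'.1, Subtype.ext_iff.mp h'.2⟩
  have hD : decMat !![a, b; c, d] ![α, β] (AP n) = Tᴴ * T := by
    ext ξ η
    rw [Matrix.mul_apply]
    simp only [Matrix.conjTranspose_apply, Matrix.of_apply, T]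
    rw [Finset.sum_eq_single (bl ξ)]
    · by_cases hmem : (ξ, η) ∈ AP n
      · have hble : bl η = bl ξ := ((hbl_eq ξ η).mp hmem).symm
        rw [if_pos rfl, if_pos hble, decMat, Matrix.of_apply, if_pos hmem]
        have hlast : ξ (Fin.last n) = η (Fin.last n) := hmem.1
        rw [cdot, Finset.sum_eq_single (bidx (ξ (Fin.last n)))]
        · simp only [cv]
          rw [hlast]
          rfl
        · intro i _ hik
          rw [(key ξ).1 i hik, map_zero, zero_mul]
        · simp
      · have hble : ¬ (bl η = bl ξ) := fun h => hmem ((hbl_eq ξ η).mpr h.symm)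
        rw [if_pos rfl, if_neg hble, decMat, Matrix.of_apply, if_neg hmem, mul_zero]
    · intro B _ hB
      rw [if_neg (fun h : bl ξ = B => hB h.symm), star_zero, zero_mul]
    · simp
  have hTT : T * Tᴴ = Matrix.diagonal (fun B => ((L B : ℝ) : ℂ)) := by
    ext B B'
    rw [Matrix.mul_apply, Matrix.diagonal_apply]
    simp only [Matrix.conjTranspose_apply, Matrix.of_apply, T]
    by_cases hBB : B = B'
    · subst hBB
      rw [if_pos rfl]
      have : ∀ ξ : Fin (n+1) → Bool,
          (if bl ξ = B then cv ξ else 0) * star (if bl ξ = B then cv ξ else 0) =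
          if bl ξ = B then ((Complex.normSq (cv ξ) : ℝ) : ℂ) else 0 := by
        intro ξ
        by_cases h : bl ξ = B
        · rw [if_pos h, if_pos h]
          exact Complex.mul_conj (cv ξ)
        · rw [if_neg h, if_neg h, zero_mul]
      rw [Finset.sum_congr rfl (fun ξ _ => this ξ), ← Finset.sum_filter]
      simp only [L]
      push_cast
      rfl
    · rw [if_neg hBB]
      apply Finset.sum_eq_zero
      intro ξ _
      by_cases h : bl ξ = B
      · have h' : ¬ (bl ξ = B') := fun hh => hBB (h.symm.trans hh)
        rw [if_neg h', star_zero, mul_zero]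
      · rw [if_neg h, zero_mul]
  have hF0 : (fun lam : ℂ => lam.re * Real.logb 2 lam.re) 0 = 0 := by simp
  have hroots := sum_roots_gram T (fun B => ((L B : ℝ) : ℂ)) hTT
      (fun lam : ℂ => lam.re * Real.logb 2 lam.re) hF0
  rw [vnEntropy, hD, hroots]
  congr 1
  have hLfalse : ∀ s : {j : ℤ // j ∈ S}, L (false, s) = pL p p₀ (n + 1) s.val := by
    intro s
    rw [pL]
    simp only [L]
    rw [Finset.sum_filter, Finset.sum_filter]
    apply Finset.sum_congr rfl
    intro ξ _
    by_cases hb : ξ (Fin.last n) = false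
    · have hbl : (bl ξ = (false, s)) ↔ pathSum ξ = s.val := by
        constructor
        · intro h
          exact Subtype.ext_iff.mp (Prod.ext_iff.mp h).2
        · intro h
          exact Prod.ext_iff.mpr ⟨hb, Subtype.ext h⟩
      by_cases hps : pathSum ξ = s.val
      · rw [if_pos (hbl.mpr hps), if_pos hps]
        have h0 : (0 : Fin 2) = bidx (ξ (Fin.last n)) := by rw [hb]; rfl
        rw [h0, ← (key ξ).2.2]
      · rw [if_neg (fun h => hps (hbl.mp h)), if_neg hps]
    · have hbl : ¬ (bl ξ = (false, s)) := by
        intro h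
        exact hb ((Prod.ext_iff.mp h).1)
      rw [if_neg hbl]
      by_cases hps : pathSum ξ = s.val
      · rw [if_pos hps]
        have hb' : ξ (Fin.last n) = true := by
          cases h : ξ (Fin.last n)
          · exact absurd h hb
          · rfl
        have : (0 : Fin 2) ≠ bidx (ξ (Fin.last n)) := by rw [hb']; exact (by decide)
        rw [(key ξ).2.1 0 this]
      · rw [if_neg hps]
  have hLtrue : ∀ s : {j : ℤ // j ∈ S}, L (true, s) = pR p p₀ (n + 1) s.val := by
    intro s
    rw [pR]
    simp only [L]
    rw [Finset.sum_filter, Finset.sum_filter]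
    apply Finset.sum_congr rfl
    intro ξ _
    by_cases hb : ξ (Fin.last n) = true
    · have hbl : (bl ξ = (true, s)) ↔ pathSum ξ = s.val := by
        constructor
        · intro h
          exact Subtype.ext_iff.mp (Prod.ext_iff.mp h).2
        · intro h
          exact Prod.ext_iff.mpr ⟨hb, Subtype.ext h⟩
      by_cases hps : pathSum ξ = s.val
      · rw [if_pos (hbl.mpr hps), if_pos hps]
        have h0 : (1 : Fin 2) = bidx (ξ (Fin.last n)) := by rw [hb]; rfl
        rw [h0, ← (key ξ).2.2]
      · rw [if_neg (fun h => hps (hbl.mp h)), if_neg hps]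
    · have hbl : ¬ (bl ξ = (true, s)) := by
        intro h
        exact hb ((Prod.ext_iff.mp h).1)
      rw [if_neg hbl]
      by_cases hps : pathSum ξ = s.val
      · rw [if_pos hps]
        have hb' : ξ (Fin.last n) = false := by
          cases h : ξ (Fin.last n)
          · rfl
          · exact absurd h hb
        have : (1 : Fin 2) ≠ bidx (ξ (Fin.last n)) := by rw [hb']; exact (by decide)
        rw [(key ξ).2.1 1 this]
      · rw [if_neg hps]
  rw [Fintype.sum_prod_type, Fintype.sum_bool]
  simp only [Complex.ofReal_re, hLtrue, hLfalse]
  rw [Finset.sum_coe_sort S (fun j => pR p p₀ (n + 1) j * Real.logb 2 (pR p p₀ (n + 1) j)),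
    Finset.sum_coe_sort S (fun j => pL p p₀ (n + 1) j * Real.logb 2 (pL p p₀ (n + 1) j)),
    ← Finset.sum_add_distrib]
  apply Finset.sum_congr rfl
  intro j _
  ring
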